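/- Define, for each integer N ≥ 1, F_det(N) = 2^{−(N+3)}·Σ_{k=0}^{N} C(N,k)·( (N−2k−1)/√(k+1) + (N−2k+1)/√(N−k+1) )², p(N) = 1 − (N+2)/2^{N+1}, and F(N) = F_det(N)/p(N). Then p(N) → 1 and F(N) → 1 as N → ∞; that is, the qubit minimal port-based teleportation protocol is convergent: its performance pair (F(N), p(N)) tends to (1,1). -/

import Mathlib

open Finset Filter

/-- Entanglement fidelity of non-optimal deterministic qubit PBT with `N`
ports and square-root measurements:
`F_det(N) = 2^{−(N+3)}·Σ_{k=0}^{N} C(N,k)·((N−2k−1)/√(k+1) + (N−2k+1)/√(N−k+1))²`. -/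
noncomputable def Fdet (N : ℕ) : ℝ :=
  (2 : ℝ) ^ (-((N : ℝ) + 3)) *
    ∑ k ∈ Finset.range (N + 1),
      (N.choose k : ℝ) *
        (((N : ℝ) - 2 * k - 1) / Real.sqrt ((k : ℝ) + 1) +
          ((N : ℝ) - 2 * k + 1) / Real.sqrt ((N : ℝ) - (k : ℝ) + 1)) ^ 2

/-- Success probability of qubit minimal PBT with `N` ports:
`p(N) = 1 − (N+2)/2^{N+1}`. -/
noncomputable def psucc (N : ℕ) : ℝ := 1 - ((N : ℝ) + 2) / 2 ^ (N + 1)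

/-- Conditional entanglement fidelity of qubit minimal PBT. -/
noncomputable def Fmin (N : ℕ) : ℝ := Fdet N / psucc N

/-! ### Auxiliary binomial identities -/

lemma pascal_sum (n : ℕ) (f : ℕ → ℤ) :
    ∑ k ∈ range (n + 2), (((n + 1).choose k : ℤ)) * f k
      = ∑ k ∈ range (n + 1), ((n.choose k : ℤ)) * f k
        + ∑ k ∈ range (n + 1), ((n.choose k : ℤ)) * f (k + 1) := by
  rw [Finset.sum_range_succ' (fun k => (((n + 1).choose k : ℤ)) * f k) (n + 1)]
  have h1 : ∀ k ∈ range (n + 1), (((n + 1).choose (k + 1) : ℤ)) * f (k + 1)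
      = ((n.choose k : ℤ)) * f (k + 1) + ((n.choose (k + 1) : ℤ)) * f (k + 1) := by
    intro k _
    rw [Nat.choose_succ_succ]
    push_cast
    ring
  rw [Finset.sum_congr rfl h1, Finset.sum_add_distrib]
  have h2 : ∑ k ∈ range (n + 1), ((n.choose (k + 1) : ℤ)) * f (k + 1)
      = ∑ k ∈ range (n + 1), ((n.choose k : ℤ)) * f k - ((n.choose 0 : ℤ)) * f 0 := by
    rw [Finset.sum_range_succ' (fun k => ((n.choose k : ℤ)) * f k) n]
    rw [Finset.sum_range_succ (fun k => ((n.choose (k + 1) : ℤ)) * f (k + 1)) n]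
    simp [Nat.choose_succ_self]
  rw [h2]
  simp
  ring

lemma sum_choose_const (n : ℕ) :
    ∑ k ∈ range (n + 1), ((n.choose k : ℤ)) = 2 ^ n := by
  have := Nat.sum_range_choose n
  exact_mod_cast congrArg (Nat.cast : ℕ → ℤ) this

lemma sum_choose_m2 (N : ℕ) :
    ∑ k ∈ range (N + 1), ((N.choose k : ℤ)) * ((N : ℤ) - 2 * k) ^ 2
      = (N : ℤ) * 2 ^ N := by
  induction N with
  | zero => simp
  | succ n ih =>
    have hp := pascal_sum n (fun k => ((n + 1 : ℤ) - 2 * k) ^ 2)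
    push_cast at hp ⊢
    rw [hp]
    have e : ∀ k ∈ range (n + 1),
        ((n.choose k : ℤ)) * ((n + 1 : ℤ) - 2 * k) ^ 2
          + ((n.choose k : ℤ)) * ((n + 1 : ℤ) - 2 * (k + 1)) ^ 2
        = 2 * (((n.choose k : ℤ)) * ((n : ℤ) - 2 * k) ^ 2) + 2 * ((n.choose k : ℤ)) := by
      intro k _; ring
    rw [← Finset.sum_add_distrib, Finset.sum_congr rfl e, Finset.sum_add_distrib,
      ← Finset.mul_sum, ← Finset.mul_sum, ih, sum_choose_const]
    ring

lemma sum_choose_m4 (N : ℕ) :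
    ∑ k ∈ range (N + 1), ((N.choose k : ℤ)) * ((N : ℤ) - 2 * k) ^ 4
      = (N : ℤ) * (3 * N - 2) * 2 ^ N := by
  induction N with
  | zero => simp
  | succ n ih =>
    have hp := pascal_sum n (fun k => ((n + 1 : ℤ) - 2 * k) ^ 4)
    push_cast at hp ⊢
    rw [hp]
    have e : ∀ k ∈ range (n + 1),
        ((n.choose k : ℤ)) * ((n + 1 : ℤ) - 2 * k) ^ 4
          + ((n.choose k : ℤ)) * ((n + 1 : ℤ) - 2 * (k + 1)) ^ 4
        = 2 * (((n.choose k : ℤ)) * ((n : ℤ) - 2 * k) ^ 4)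
          + 12 * (((n.choose k : ℤ)) * ((n : ℤ) - 2 * k) ^ 2)
          + 2 * ((n.choose k : ℤ)) := by
      intro k _; ring
    rw [← Finset.sum_add_distrib, Finset.sum_congr rfl e, Finset.sum_add_distrib,
      Finset.sum_add_distrib, ← Finset.mul_sum, ← Finset.mul_sum, ← Finset.mul_sum,
      ih, sum_choose_m2, sum_choose_const]
    ring

lemma choose_ratio {N k : ℕ} (hk : k ≤ N) :
    ((N + 2).choose (k + 1) : ℤ) * ((k : ℤ) + 1) * ((N : ℤ) - k + 1)
      = ((N : ℤ) + 1) * ((N : ℤ) + 2) * (N.choose k : ℤ) := by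
  have h1 : (N + 2) * (N + 1).choose k = (N + 2).choose (k + 1) * (k + 1) :=
    Nat.add_one_mul_choose_eq (N + 1) k
  have h2 : N.choose k * (N + 1) = (N + 1).choose k * (N + 1 - k) :=
    Nat.choose_mul_succ_eq N k
  have hsub : ((N + 1 - k : ℕ) : ℤ) = (N : ℤ) - k + 1 := by omega
  have h1' : ((N : ℤ) + 2) * ((N + 1).choose k : ℤ)
      = ((N + 2).choose (k + 1) : ℤ) * ((k : ℤ) + 1) := by exact_mod_cast h1
  have h2' : (N.choose k : ℤ) * ((N : ℤ) + 1)
      = ((N + 1).choose k : ℤ) * ((N : ℤ) - k + 1) := by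
    rw [← hsub]; exact_mod_cast h2
  nlinarith [h1', h2']

lemma sum_choose_shift (N : ℕ) :
    ∑ k ∈ range (N + 1), (((N + 2).choose (k + 1) : ℤ)) = 2 ^ (N + 2) - 2 := by
  have h0 : ∑ j ∈ range (N + 3), ((N + 2).choose j : ℤ) = 2 ^ (N + 2) := by
    exact_mod_cast congrArg (Nat.cast : ℕ → ℤ) (Nat.sum_range_choose (N + 2))
  rw [Finset.sum_range_succ, Finset.sum_range_succ'] at h0
  simp at h0
  omega

/-! ### The per-term algebraic identity -/

lemma st_identity (s t : ℝ) (hs : s ≠ 0) (ht : t ≠ 0) :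
    ((t^2 - s^2 - 1)/s + (t^2 - s^2 + 1)/t)^2
      = (s^2+t^2)*(s^2+t^2-1)^2/(s^2*t^2) - 4*(s^2+t^2-2)
        + 2*((t^2-s^2)^2-1)/(s*t) := by
  field_simp
  ring

lemma perterm (N k : ℕ) (hk : k ≤ N) :
    (((N : ℝ) - 2 * k - 1) / Real.sqrt ((k : ℝ) + 1) +
        ((N : ℝ) - 2 * k + 1) / Real.sqrt ((N : ℝ) - (k : ℝ) + 1)) ^ 2
      = ((N : ℝ) + 2) * ((N : ℝ) + 1) ^ 2 / (((k : ℝ) + 1) * ((N : ℝ) - k + 1))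
        - 4 * ((N : ℝ)) + 2 * (((N : ℝ) - 2 * k) ^ 2 - 1) /
            (Real.sqrt ((k : ℝ) + 1) * Real.sqrt ((N : ℝ) - (k : ℝ) + 1)) := by
  have hkN : (k : ℝ) ≤ (N : ℝ) := by exact_mod_cast hk
  set s := Real.sqrt ((k : ℝ) + 1) with hs
  set t := Real.sqrt ((N : ℝ) - (k : ℝ) + 1) with ht
  have hs0 : 0 < s := Real.sqrt_pos.2 (by positivity)
  have ht0 : 0 < t := Real.sqrt_pos.2 (by linarith)
  have hs2 : s ^ 2 = (k : ℝ) + 1 := Real.sq_sqrt (by positivity)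
  have ht2 : t ^ 2 = (N : ℝ) - (k : ℝ) + 1 := Real.sq_sqrt (by linarith)
  clear_value s t
  rw [show (N : ℝ) - 2 * k - 1 = t^2 - s^2 - 1 by linarith,
      show (N : ℝ) - 2 * k + 1 = t^2 - s^2 + 1 by linarith,
      show (N : ℝ) - 2 * k = t^2 - s^2 by linarith,
      show ((k : ℝ) + 1) = s^2 by linarith,
      show (N : ℝ) - (k : ℝ) + 1 = t^2 by linarith,
      show (N : ℝ) + 2 = s^2 + t^2 by linarith,
      show (N : ℝ) + 1 = s^2 + t^2 - 1 by linarith,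
      show (N : ℝ) = s^2 + t^2 - 2 by linarith]
  exact st_identity s t (ne_of_gt hs0) (ne_of_gt ht0)

/-! ### The remainder sum `Sr` and the decomposition of `Fdet` -/

noncomputable def Sr (N : ℕ) : ℝ :=
  ∑ k ∈ range (N + 1),
    (N.choose k : ℝ) * (((N : ℝ) - 2 * k) ^ 2 - 1) /
      (Real.sqrt ((k : ℝ) + 1) * Real.sqrt ((N : ℝ) - (k : ℝ) + 1))

lemma sum_choose_constR (N : ℕ) :
    ∑ k ∈ range (N + 1), ((N.choose k : ℝ)) = 2 ^ N := by
  exact_mod_cast congrArg (Int.cast : ℤ → ℝ) (sum_choose_const N)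

lemma sum_choose_m2R (N : ℕ) :
    ∑ k ∈ range (N + 1), ((N.choose k : ℝ)) * ((N : ℝ) - 2 * k) ^ 2
      = (N : ℝ) * 2 ^ N := by
  exact_mod_cast congrArg (Int.cast : ℤ → ℝ) (sum_choose_m2 N)

lemma sum_choose_m4R (N : ℕ) :
    ∑ k ∈ range (N + 1), ((N.choose k : ℝ)) * ((N : ℝ) - 2 * k) ^ 4
      = (N : ℝ) * (3 * N - 2) * 2 ^ N := by
  exact_mod_cast congrArg (Int.cast : ℤ → ℝ) (sum_choose_m4 N)

lemma sum_choose_shiftR (N : ℕ) :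
    ∑ k ∈ range (N + 1), (((N + 2).choose (k + 1) : ℝ)) = 2 ^ (N + 2) - 2 := by
  exact_mod_cast congrArg (Int.cast : ℤ → ℝ) (sum_choose_shift N)

lemma sum_choose_m2m1R (N : ℕ) :
    ∑ k ∈ range (N + 1), ((N.choose k : ℝ)) * (((N : ℝ) - 2 * k) ^ 2 - 1)
      = ((N : ℝ) - 1) * 2 ^ N := by
  have e : ∀ k ∈ range (N + 1),
      ((N.choose k : ℝ)) * (((N : ℝ) - 2 * k) ^ 2 - 1)
        = ((N.choose k : ℝ)) * ((N : ℝ) - 2 * k) ^ 2 - ((N.choose k : ℝ)) := by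
    intro k _; ring
  rw [Finset.sum_congr rfl e, Finset.sum_sub_distrib, sum_choose_m2R, sum_choose_constR]
  ring

lemma Fdet_eq (N : ℕ) :
    Fdet N = 1 / 2 - ((N : ℝ) + 1) / 2 ^ (N + 2) + Sr N / 2 ^ (N + 2) := by
  have hrw : ∀ k ∈ range (N + 1),
      (N.choose k : ℝ) *
        (((N : ℝ) - 2 * k - 1) / Real.sqrt ((k : ℝ) + 1) +
          ((N : ℝ) - 2 * k + 1) / Real.sqrt ((N : ℝ) - (k : ℝ) + 1)) ^ 2
      = ((N : ℝ) + 1) * (((N + 2).choose (k + 1) : ℝ))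
        + (-(4 * (N : ℝ))) * ((N.choose k : ℝ))
        + 2 * ((N.choose k : ℝ) * (((N : ℝ) - 2 * k) ^ 2 - 1) /
            (Real.sqrt ((k : ℝ) + 1) * Real.sqrt ((N : ℝ) - (k : ℝ) + 1))) := by
    intro k hk
    have hkN : k ≤ N := by
      have := Finset.mem_range.1 hk; omega
    rw [perterm N k hkN]
    have hkR : (k : ℝ) ≤ (N : ℝ) := by exact_mod_cast hkN
    have hd1 : (0 : ℝ) < (k : ℝ) + 1 := by positivity
    have hd2 : (0 : ℝ) < (N : ℝ) - k + 1 := by linarith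
    have hcr : (((N + 2).choose (k + 1) : ℝ)) * ((k : ℝ) + 1) * ((N : ℝ) - k + 1)
        = ((N : ℝ) + 1) * ((N : ℝ) + 2) * (N.choose k : ℝ) := by
      exact_mod_cast congrArg (Int.cast : ℤ → ℝ) (choose_ratio hkN)
    have e1 : (N.choose k : ℝ) *
        (((N : ℝ) + 2) * ((N : ℝ) + 1) ^ 2 / (((k : ℝ) + 1) * ((N : ℝ) - k + 1)))
        = ((N : ℝ) + 1) * (((N + 2).choose (k + 1) : ℝ)) := by
      rw [mul_div_assoc'] at *
      rw [div_eq_iff (by positivity)]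
      nlinarith [hcr]
    rw [mul_add, mul_sub, e1]
    ring
  unfold Fdet
  rw [Finset.sum_congr rfl hrw, Finset.sum_add_distrib, Finset.sum_add_distrib,
    ← Finset.mul_sum, ← Finset.mul_sum, ← Finset.mul_sum,
    sum_choose_shiftR, sum_choose_constR]
  have hS : ∑ k ∈ range (N + 1),
      (N.choose k : ℝ) * (((N : ℝ) - 2 * k) ^ 2 - 1) /
        (Real.sqrt ((k : ℝ) + 1) * Real.sqrt ((N : ℝ) - (k : ℝ) + 1)) = Sr N := rfl
  rw [hS]
  have hpow : (2 : ℝ) ^ (-((N : ℝ) + 3)) = ((2 : ℝ) ^ (N + 3))⁻¹ := by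
    rw [show -((N : ℝ) + 3) = -(((N + 3 : ℕ) : ℝ)) by push_cast; ring,
      Real.rpow_neg (by norm_num), Real.rpow_natCast]
  rw [hpow]
  have h2 : (2 : ℝ) ^ (N + 3) = 2 ^ N * 8 := by rw [pow_add]; norm_num
  have h3 : (2 : ℝ) ^ (N + 2) = 2 ^ N * 4 := by rw [pow_add]; norm_num
  rw [h2, h3]
  have hne : (2 : ℝ) ^ N ≠ 0 := by positivity
  field_simp
  ring

/-! ### Bounds on `Sr` -/

lemma u_facts (N k : ℕ) (hk : k ≤ N) :
    0 < Real.sqrt ((k : ℝ) + 1) * Real.sqrt ((N : ℝ) - (k : ℝ) + 1) ∧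
    Real.sqrt ((k : ℝ) + 1) * Real.sqrt ((N : ℝ) - (k : ℝ) + 1) ≤ ((N : ℝ) + 2) / 2 ∧
    Real.sqrt ((N : ℝ) + 1) ≤ Real.sqrt ((k : ℝ) + 1) * Real.sqrt ((N : ℝ) - (k : ℝ) + 1) ∧
    (Real.sqrt ((k : ℝ) + 1) * Real.sqrt ((N : ℝ) - (k : ℝ) + 1)) ^ 2
      = ((k : ℝ) + 1) * ((N : ℝ) - (k : ℝ) + 1) := by
  have hkR : (k : ℝ) ≤ (N : ℝ) := by exact_mod_cast hk
  have h1 : (0 : ℝ) < (k : ℝ) + 1 := by positivity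
  have h2 : (0 : ℝ) < (N : ℝ) - (k : ℝ) + 1 := by linarith
  have hprod : Real.sqrt ((k : ℝ) + 1) * Real.sqrt ((N : ℝ) - (k : ℝ) + 1)
      = Real.sqrt (((k : ℝ) + 1) * ((N : ℝ) - (k : ℝ) + 1)) :=
    (Real.sqrt_mul (le_of_lt h1) _).symm
  refine ⟨?_, ?_, ?_, ?_⟩
  · exact mul_pos (Real.sqrt_pos.2 h1) (Real.sqrt_pos.2 h2)
  · rw [hprod]
    have hle : ((k : ℝ) + 1) * ((N : ℝ) - (k : ℝ) + 1) ≤ (((N : ℝ) + 2) / 2) ^ 2 := by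
      nlinarith [sq_nonneg ((N : ℝ) - 2 * k)]
    calc Real.sqrt (((k : ℝ) + 1) * ((N : ℝ) - (k : ℝ) + 1))
        ≤ Real.sqrt ((((N : ℝ) + 2) / 2) ^ 2) := Real.sqrt_le_sqrt hle
      _ = ((N : ℝ) + 2) / 2 := Real.sqrt_sq (by positivity)
  · rw [hprod]
    apply Real.sqrt_le_sqrt
    nlinarith [mul_nonneg (Nat.cast_nonneg (α := ℝ) k) (sub_nonneg.2 hkR)]
  · rw [mul_pow, Real.sq_sqrt (le_of_lt h1), Real.sq_sqrt (le_of_lt h2)]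

lemma Sr_lower (N : ℕ) : 2 * ((N : ℝ) - 1) * 2 ^ N / ((N : ℝ) + 2) ≤ Sr N := by
  have hterm : ∀ k ∈ range (N + 1),
      (N.choose k : ℝ) * (((N : ℝ) - 2 * k) ^ 2 - 1) * (2 / ((N : ℝ) + 2))
        ≤ (N.choose k : ℝ) * (((N : ℝ) - 2 * k) ^ 2 - 1) /
            (Real.sqrt ((k : ℝ) + 1) * Real.sqrt ((N : ℝ) - (k : ℝ) + 1)) := by
    intro k hk
    have hkN : k ≤ N := by have := Finset.mem_range.1 hk; omega
    obtain ⟨hu0, huA, huN, hu2⟩ := u_facts N k hkN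
    set u := Real.sqrt ((k : ℝ) + 1) * Real.sqrt ((N : ℝ) - (k : ℝ) + 1) with hu
    have hA : (0 : ℝ) < (N : ℝ) + 2 := by positivity
    by_cases hpos : 0 ≤ ((N : ℝ) - 2 * k) ^ 2 - 1
    · have hC : (0 : ℝ) ≤ (N.choose k : ℝ) := Nat.cast_nonneg _
      have hfrac : 2 / ((N : ℝ) + 2) ≤ 1 / u := by
        rw [div_le_div_iff₀ hA hu0]
        linarith
      calc (N.choose k : ℝ) * (((N : ℝ) - 2 * k) ^ 2 - 1) * (2 / ((N : ℝ) + 2))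
          ≤ (N.choose k : ℝ) * (((N : ℝ) - 2 * k) ^ 2 - 1) * (1 / u) := by
            apply mul_le_mul_of_nonneg_left hfrac (mul_nonneg hC hpos)
        _ = (N.choose k : ℝ) * (((N : ℝ) - 2 * k) ^ 2 - 1) / u := by ring
    · push_neg at hpos
      have hZ : ((N : ℤ) - 2 * k) ^ 2 < 1 := by
        exact_mod_cast (show (((N : ℤ) - 2 * k : ℤ) : ℝ) ^ 2 < 1 by push_cast; linarith)
      have hm0 : (N : ℤ) - 2 * k = 0 := by nlinarith [sq_nonneg ((N : ℤ) - 2 * k)]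
      have hN2k : N = 2 * k := by omega
      subst hN2k
      have hx : ((2 * k : ℕ) : ℝ) - (k : ℝ) + 1 = (k : ℝ) + 1 := by push_cast; ring
      rw [hu, hx, Real.mul_self_sqrt (by positivity)]
      apply le_of_eq
      have hk1 : ((k : ℝ) + 1) ≠ 0 := by positivity
      have hk2 : ((2 * k : ℕ) : ℝ) + 2 ≠ 0 := by positivity
      field_simp
      push_cast
      ring
  have hsum := Finset.sum_le_sum hterm
  have hL : ∑ k ∈ range (N + 1),
      (N.choose k : ℝ) * (((N : ℝ) - 2 * k) ^ 2 - 1) * (2 / ((N : ℝ) + 2))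
      = 2 * ((N : ℝ) - 1) * 2 ^ N / ((N : ℝ) + 2) := by
    rw [← Finset.sum_mul, sum_choose_m2m1R]
    ring
  rw [hL] at hsum
  exact hsum

lemma Sr_upper (N : ℕ) :
    Sr N ≤ 2 * ((N : ℝ) - 1) * 2 ^ N / ((N : ℝ) + 2)
      + 3 * 2 ^ N / Real.sqrt ((N : ℝ) + 1) := by
  have hv : (0 : ℝ) < Real.sqrt ((N : ℝ) + 1) := Real.sqrt_pos.2 (by positivity)
  have hA : (0 : ℝ) < (N : ℝ) + 2 := by positivity
  have hterm : ∀ k ∈ range (N + 1),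
      (N.choose k : ℝ) * (((N : ℝ) - 2 * k) ^ 2 - 1) /
          (Real.sqrt ((k : ℝ) + 1) * Real.sqrt ((N : ℝ) - (k : ℝ) + 1))
        ≤ (N.choose k : ℝ) * (((N : ℝ) - 2 * k) ^ 2 - 1) * (2 / ((N : ℝ) + 2))
          + (N.choose k : ℝ) * ((N : ℝ) - 2 * k) ^ 4 /
              (((N : ℝ) + 2) ^ 2 * Real.sqrt ((N : ℝ) + 1)) := by
    intro k hk
    have hkN : k ≤ N := by have := Finset.mem_range.1 hk; omega
    obtain ⟨hu0, huA, huN, hu2⟩ := u_facts N k hkN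
    set u := Real.sqrt ((k : ℝ) + 1) * Real.sqrt ((N : ℝ) - (k : ℝ) + 1) with hu
    set v := Real.sqrt ((N : ℝ) + 1) with hvdef
    have hC : (0 : ℝ) ≤ (N.choose k : ℝ) := Nat.cast_nonneg _
    set m := (N : ℝ) - 2 * k with hm
    by_cases hpos : 0 ≤ m ^ 2 - 1
    · have hu' : u ≠ 0 := ne_of_gt hu0
      have hA' : ((N : ℝ) + 2) ≠ 0 := ne_of_gt hA
      have key : (((N : ℝ) + 2) - 2 * u) * (((N : ℝ) + 2) + 2 * u) = m ^ 2 := by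
        linear_combination (-4 : ℝ) * hu2 - (m + ((N : ℝ) - 2 * k)) * hm
      have hApos : (0 : ℝ) < ((N : ℝ) + 2) + 2 * u := by linarith
      have hAu : ((N : ℝ) + 2) - 2 * u = m ^ 2 / (((N : ℝ) + 2) + 2 * u) := by
        rw [eq_div_iff (ne_of_gt hApos)]
        linear_combination key
      have h1 : (m ^ 2 - 1) / u - (m ^ 2 - 1) * (2 / ((N : ℝ) + 2))
          = (m ^ 2 - 1) * ((((N : ℝ) + 2) - 2 * u)) / (u * ((N : ℝ) + 2)) := by
        field_simp
      have t1 : m ^ 2 / (((N : ℝ) + 2) + 2 * u) ≤ m ^ 2 / ((N : ℝ) + 2) :=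
        div_le_div_of_nonneg_left (sq_nonneg m) hA (by linarith)
      have t2 : (m ^ 2 - 1) * (((N : ℝ) + 2) - 2 * u) ≤ m ^ 4 / ((N : ℝ) + 2) := by
        have h2u : 0 ≤ ((N : ℝ) + 2) - 2 * u := by linarith
        calc (m ^ 2 - 1) * (((N : ℝ) + 2) - 2 * u)
            ≤ m ^ 2 * (((N : ℝ) + 2) - 2 * u) := by nlinarith
          _ ≤ m ^ 2 * (m ^ 2 / ((N : ℝ) + 2)) := by
              rw [hAu]
              exact mul_le_mul_of_nonneg_left t1 (sq_nonneg m)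
          _ = m ^ 4 / ((N : ℝ) + 2) := by ring
      have hbound : (m ^ 2 - 1) * (((N : ℝ) + 2) - 2 * u) / (u * ((N : ℝ) + 2))
          ≤ m ^ 4 / (((N : ℝ) + 2) ^ 2 * v) := by
        calc (m ^ 2 - 1) * (((N : ℝ) + 2) - 2 * u) / (u * ((N : ℝ) + 2))
            ≤ (m ^ 4 / ((N : ℝ) + 2)) / (v * ((N : ℝ) + 2)) := by
              apply div_le_div₀ (by positivity) t2 (mul_pos hv hA)
              exact mul_le_mul_of_nonneg_right huN (le_of_lt hA)
          _ = m ^ 4 / (((N : ℝ) + 2) ^ 2 * v) := by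
              rw [div_div]
              congr 1
              ring
      have step : (m ^ 2 - 1) / u
          ≤ (m ^ 2 - 1) * (2 / ((N : ℝ) + 2)) + m ^ 4 / (((N : ℝ) + 2) ^ 2 * v) := by
        linarith [h1, hbound]
      calc (N.choose k : ℝ) * (m ^ 2 - 1) / u
          = (N.choose k : ℝ) * ((m ^ 2 - 1) / u) := by ring
        _ ≤ (N.choose k : ℝ) * ((m ^ 2 - 1) * (2 / ((N : ℝ) + 2)) + m ^ 4 / (((N : ℝ) + 2) ^ 2 * v)) :=
            mul_le_mul_of_nonneg_left step hC
        _ = (N.choose k : ℝ) * (m ^ 2 - 1) * (2 / ((N : ℝ) + 2))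
            + (N.choose k : ℝ) * m ^ 4 / (((N : ℝ) + 2) ^ 2 * v) := by ring
    · push_neg at hpos
      have hZ : ((N : ℤ) - 2 * k) ^ 2 < 1 := by
        exact_mod_cast (show (((N : ℤ) - 2 * k : ℤ) : ℝ) ^ 2 < 1 by push_cast; rw [← hm]; linarith)
      have hm0 : (N : ℤ) - 2 * k = 0 := by nlinarith [sq_nonneg ((N : ℤ) - 2 * k)]
      have hN2k : N = 2 * k := by omega
      subst hN2k
      have hmz : m = 0 := by rw [hm]; push_cast; ring
      rw [hmz]
      have hx : ((2 * k : ℕ) : ℝ) - (k : ℝ) + 1 = (k : ℝ) + 1 := by push_cast; ring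
      rw [hu, hx, Real.mul_self_sqrt (by positivity)]
      apply le_of_eq
      have hk1 : ((k : ℝ) + 1) ≠ 0 := by positivity
      have hk2 : ((2 * k : ℕ) : ℝ) + 2 ≠ 0 := by positivity
      have hv2 : v ≠ 0 := ne_of_gt hv
      field_simp
      push_cast
      ring
  have hsum := Finset.sum_le_sum hterm
  have hSr : Sr N = ∑ k ∈ range (N + 1),
      (N.choose k : ℝ) * (((N : ℝ) - 2 * k) ^ 2 - 1) /
        (Real.sqrt ((k : ℝ) + 1) * Real.sqrt ((N : ℝ) - (k : ℝ) + 1)) := rfl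
  rw [← hSr] at hsum
  have hsplit : ∑ k ∈ range (N + 1),
      ((N.choose k : ℝ) * (((N : ℝ) - 2 * k) ^ 2 - 1) * (2 / ((N : ℝ) + 2))
        + (N.choose k : ℝ) * ((N : ℝ) - 2 * k) ^ 4 /
            (((N : ℝ) + 2) ^ 2 * Real.sqrt ((N : ℝ) + 1)))
      = 2 * ((N : ℝ) - 1) * 2 ^ N / ((N : ℝ) + 2)
        + (N : ℝ) * (3 * N - 2) * 2 ^ N / (((N : ℝ) + 2) ^ 2 * Real.sqrt ((N : ℝ) + 1)) := by
    rw [Finset.sum_add_distrib, ← Finset.sum_mul, sum_choose_m2m1R]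
    have : ∑ k ∈ range (N + 1), (N.choose k : ℝ) * ((N : ℝ) - 2 * k) ^ 4 /
        (((N : ℝ) + 2) ^ 2 * Real.sqrt ((N : ℝ) + 1))
        = ((N : ℝ) * (3 * N - 2) * 2 ^ N) / (((N : ℝ) + 2) ^ 2 * Real.sqrt ((N : ℝ) + 1)) := by
      rw [← Finset.sum_div, sum_choose_m4R]
    rw [this]
    ring
  rw [hsplit] at hsum
  have hlast : (N : ℝ) * (3 * N - 2) * 2 ^ N / (((N : ℝ) + 2) ^ 2 * Real.sqrt ((N : ℝ) + 1))
      ≤ 3 * 2 ^ N / Real.sqrt ((N : ℝ) + 1) := by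
    rw [div_le_div_iff₀ (by positivity) hv]
    have h2N : (0 : ℝ) < 2 ^ N := by positivity
    nlinarith [hv, h2N, sq_nonneg ((N : ℝ) + 2), Nat.cast_nonneg (α := ℝ) N,
      mul_pos h2N hv]
  linarith

/-! ### Limits -/

lemma tendsto_poly_div_two_pow (c : ℝ) (d : ℕ) :
    Tendsto (fun N : ℕ => ((N : ℝ) + c) / 2 ^ (N + d)) atTop (nhds 0) := by
  have h1 : Tendsto (fun n : ℕ => ((n : ℝ) ^ 1) / 2 ^ n) atTop (nhds 0) :=
    tendsto_pow_const_div_const_pow_of_one_lt 1 (by norm_num)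
  have h2 : Tendsto (fun n : ℕ => ((1 : ℝ) / 2) ^ n) atTop (nhds 0) :=
    tendsto_pow_atTop_nhds_zero_of_lt_one (by norm_num) (by norm_num)
  have heq : (fun N : ℕ => ((N : ℝ) + c) / 2 ^ (N + d))
      = fun N : ℕ => (((N : ℝ) ^ 1) / 2 ^ N) * (1 / 2 ^ d) + ((1 : ℝ) / 2) ^ N * (c / 2 ^ d) := by
    funext N
    have : ((1 : ℝ) / 2) ^ N = 1 / 2 ^ N := by rw [div_pow]; norm_num
    rw [this, pow_add]
    have h2N : (2 : ℝ) ^ N ≠ 0 := by positivity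
    have h2d : (2 : ℝ) ^ d ≠ 0 := by positivity
    field_simp
    try ring
  rw [heq]
  have := (h1.mul_const (1 / 2 ^ d)).add (h2.mul_const (c / 2 ^ d))
  simpa using this

lemma psucc_tendsto : Tendsto psucc atTop (nhds 1) := by
  have h := tendsto_poly_div_two_pow 2 1
  have : Tendsto (fun N : ℕ => 1 - ((N : ℝ) + 2) / 2 ^ (N + 1)) atTop (nhds (1 - 0)) :=
    tendsto_const_nhds.sub h
  exact (by simpa using this : Tendsto (fun N : ℕ => 1 - ((N : ℝ) + 2) / 2 ^ (N + 1)) atTop (nhds 1))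

lemma tendsto_inv_shift : Tendsto (fun N : ℕ => 1 / ((N : ℝ) + 2)) atTop (nhds 0) := by
  have h : Tendsto (fun N : ℕ => (N : ℝ) + 2) atTop atTop :=
    tendsto_atTop_add_const_right atTop 2 tendsto_natCast_atTop_atTop
  simpa [one_div, Pi.inv_def] using h.inv_tendsto_atTop

lemma tendsto_inv_sqrt : Tendsto (fun N : ℕ => 1 / Real.sqrt ((N : ℝ) + 1)) atTop (nhds 0) := by
  have h : Tendsto (fun N : ℕ => (N : ℝ) + 1) atTop atTop :=
    tendsto_atTop_add_const_right atTop 1 tendsto_natCast_atTop_atTop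
  have h2 : Tendsto (fun N : ℕ => ((N : ℝ) + 1)⁻¹) atTop (nhds 0) := h.inv_tendsto_atTop
  have h3 : Tendsto (fun N : ℕ => Real.sqrt (((N : ℝ) + 1)⁻¹)) atTop (nhds (Real.sqrt 0)) :=
    (Real.continuous_sqrt.tendsto 0).comp h2
  have heq : (fun N : ℕ => Real.sqrt (((N : ℝ) + 1)⁻¹))
      = fun N : ℕ => 1 / Real.sqrt ((N : ℝ) + 1) := by
    funext N
    rw [Real.sqrt_inv, one_div]
  rw [heq] at h3
  simpa using h3

lemma ratio_tendsto : Tendsto (fun N : ℕ => ((N : ℝ) - 1) / (2 * ((N : ℝ) + 2))) atTop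
    (nhds (1 / 2)) := by
  have heq : (fun N : ℕ => ((N : ℝ) - 1) / (2 * ((N : ℝ) + 2)))
      = fun N : ℕ => 1 / 2 - (3 / 2) * (1 / ((N : ℝ) + 2)) := by
    funext N
    have : ((N : ℝ) + 2) ≠ 0 := by positivity
    field_simp
    ring
  rw [heq]
  have := tendsto_const_nhds (x := (1 / 2 : ℝ)) (f := atTop (α := ℕ)) |>.sub
    ((tendsto_inv_shift).const_mul (3 / 2))
  simpa using this

noncomputable def Lb (N : ℕ) : ℝ :=
  1 / 2 - ((N : ℝ) + 1) / 2 ^ (N + 2) + ((N : ℝ) - 1) / (2 * ((N : ℝ) + 2))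

noncomputable def Ub (N : ℕ) : ℝ := Lb N + 3 / 4 * (1 / Real.sqrt ((N : ℝ) + 1))

lemma Lb_tendsto : Tendsto Lb atTop (nhds 1) := by
  have h := (tendsto_const_nhds (x := (1 / 2 : ℝ)) (f := atTop (α := ℕ)) |>.sub
    (tendsto_poly_div_two_pow 1 2)).add ratio_tendsto
  have h1 : (1 / 2 : ℝ) - 0 + 1 / 2 = 1 := by norm_num
  rw [h1] at h
  exact h

lemma Ub_tendsto : Tendsto Ub atTop (nhds 1) := by
  have h := Lb_tendsto.add (tendsto_inv_sqrt.const_mul (3 / 4))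
  have h1 : (1 : ℝ) + 3 / 4 * 0 = 1 := by norm_num
  rw [h1] at h
  have heq : Ub = fun N => Lb N + 3 / 4 * (1 / Real.sqrt ((N : ℝ) + 1)) := rfl
  rw [heq]
  exact h

lemma Lb_le_Fdet (N : ℕ) : Lb N ≤ Fdet N := by
  rw [Fdet_eq N]
  unfold Lb
  have h2N : (0 : ℝ) < 2 ^ (N + 2) := by positivity
  have hA : (0 : ℝ) < (N : ℝ) + 2 := by positivity
  have h1 : ((N : ℝ) - 1) / (2 * ((N : ℝ) + 2))
      = (2 * ((N : ℝ) - 1) * 2 ^ N / ((N : ℝ) + 2)) / 2 ^ (N + 2) := by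
    rw [pow_add]
    field_simp
    try ring
  have h2 : (2 * ((N : ℝ) - 1) * 2 ^ N / ((N : ℝ) + 2)) / 2 ^ (N + 2) ≤ Sr N / 2 ^ (N + 2) :=
    (div_le_div_iff_of_pos_right h2N).mpr (Sr_lower N)
  linarith [h1 ▸ h2]

lemma Fdet_le_Ub (N : ℕ) : Fdet N ≤ Ub N := by
  rw [Fdet_eq N]
  unfold Ub Lb
  have h2N : (0 : ℝ) < 2 ^ (N + 2) := by positivity
  have hA : (0 : ℝ) < (N : ℝ) + 2 := by positivity
  have hv : (0 : ℝ) < Real.sqrt ((N : ℝ) + 1) := Real.sqrt_pos.2 (by positivity)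
  have h1 : ((N : ℝ) - 1) / (2 * ((N : ℝ) + 2))
      = (2 * ((N : ℝ) - 1) * 2 ^ N / ((N : ℝ) + 2)) / 2 ^ (N + 2) := by
    rw [pow_add]
    field_simp
    try ring
  have h3 : (3 : ℝ) / 4 * (1 / Real.sqrt ((N : ℝ) + 1))
      = (3 * 2 ^ N / Real.sqrt ((N : ℝ) + 1)) / 2 ^ (N + 2) := by
    rw [pow_add]
    field_simp
    try ring
  have h2 : Sr N / 2 ^ (N + 2)
      ≤ (2 * ((N : ℝ) - 1) * 2 ^ N / ((N : ℝ) + 2)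
          + 3 * 2 ^ N / Real.sqrt ((N : ℝ) + 1)) / 2 ^ (N + 2) :=
    (div_le_div_iff_of_pos_right h2N).mpr (Sr_upper N)
  rw [add_div] at h2
  linarith [h1 ▸ h2, h3]

lemma Fdet_tendsto : Tendsto Fdet atTop (nhds 1) :=
  tendsto_of_tendsto_of_tendsto_of_le_of_le Lb_tendsto Ub_tendsto Lb_le_Fdet Fdet_le_Ub

/-- Qubit minimal PBT is convergent: its performance pair
`(F(N), p(N))` tends to `(1, 1)` as the number of ports `N → ∞`. -/
theorem mPBT_convergent :
    Tendsto psucc atTop (nhds 1) ∧ Tendsto Fmin atTop (nhds 1) := by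
  refine ⟨psucc_tendsto, ?_⟩
  have h := Fdet_tendsto.div psucc_tendsto one_ne_zero
  exact (by simpa [Pi.div_def] using h : Tendsto (fun N => Fdet N / psucc N) atTop (nhds 1))
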